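/- Let δ ≥ 0, p ∈ (1,∞), and S(A) = (δ + |A^sym|)^(p-2) A^sym, F(A) = (δ + |A^sym|)^((p-2)/2) A^sym for d×d matrices. If δ > 0 and p ≥ 2, then there is a constant c > 0 depending only on p such that for all d×d matrices A, B: δ^(p-2) |A^sym - B^sym|² ≤ c |F(A) - F(B)|². -/

import Mathlib

open Matrix in
/-- Symmetric part of a square matrix. -/
noncomputable def msym {d : ℕ} (A : Matrix (Fin d) (Fin d) ℝ) : Matrix (Fin d) (Fin d) ℝ :=
  (1/2 : ℝ) • (A + Aᵀ)

/-- Frobenius norm of a matrix. -/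
noncomputable def frob {d : ℕ} (A : Matrix (Fin d) (Fin d) ℝ) : ℝ :=
  Real.sqrt (∑ i, ∑ j, (A i j) ^ 2)

/-- Frobenius inner product of two matrices. -/
noncomputable def frobInner {d : ℕ} (A B : Matrix (Fin d) (Fin d) ℝ) : ℝ :=
  ∑ i, ∑ j, A i j * B i j

/-- The extra-stress tensor `S(A) = (δ + |A^sym|)^(p-2) A^sym` (with `ν₀ = 1`). -/
noncomputable def Smap (δ p : ℝ) {d : ℕ} (A : Matrix (Fin d) (Fin d) ℝ) :
    Matrix (Fin d) (Fin d) ℝ :=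
  ((δ + frob (msym A)) ^ (p - 2)) • msym A

/-- The nonlinear quantity `F(A) = (δ + |A^sym|)^((p-2)/2) A^sym`. -/
noncomputable def Fmap (δ p : ℝ) {d : ℕ} (A : Matrix (Fin d) (Fin d) ℝ) :
    Matrix (Fin d) (Fin d) ℝ :=
  ((δ + frob (msym A)) ^ ((p - 2) / 2)) • msym A

section Aux

open Finset

lemma frob_nonneg {d : ℕ} (A : Matrix (Fin d) (Fin d) ℝ) : 0 ≤ frob A :=
  Real.sqrt_nonneg _

lemma frobInner_self {d : ℕ} (A : Matrix (Fin d) (Fin d) ℝ) :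
    frobInner A A = frob A ^ 2 := by
  rw [frob, frobInner, Real.sq_sqrt]
  · exact Finset.sum_congr rfl fun i _ => Finset.sum_congr rfl fun j _ => (sq (A i j)).symm
  · exact Finset.sum_nonneg fun i _ => Finset.sum_nonneg fun j _ => sq_nonneg _

lemma frobInner_le {d : ℕ} (A B : Matrix (Fin d) (Fin d) ℝ) :
    frobInner A B ≤ frob A * frob B := by
  have key : (frobInner A B) ^ 2 ≤ (frob A * frob B) ^ 2 := by
    have h := Finset.sum_mul_sq_le_sq_mul_sq Finset.univ
      (fun ij : Fin d × Fin d => A ij.1 ij.2) (fun ij : Fin d × Fin d => B ij.1 ij.2)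
    rw [frobInner, frob, frob, mul_pow, Real.sq_sqrt, Real.sq_sqrt]
    · simpa [Fintype.sum_prod_type] using h
    · exact Finset.sum_nonneg fun i _ => Finset.sum_nonneg fun j _ => sq_nonneg _
    · exact Finset.sum_nonneg fun i _ => Finset.sum_nonneg fun j _ => sq_nonneg _
  exact le_of_sq_le_sq key (mul_nonneg (frob_nonneg A) (frob_nonneg B))

lemma frobInner_comm {d : ℕ} (A B : Matrix (Fin d) (Fin d) ℝ) :
    frobInner A B = frobInner B A := by
  unfold frobInner
  exact Finset.sum_congr rfl fun i _ => Finset.sum_congr rfl fun j _ => mul_comm _ _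

lemma frobInner_expand {d : ℕ} (x y : ℝ) (a b : Matrix (Fin d) (Fin d) ℝ) :
    frobInner (x • a - y • b) (a - b)
      = x * frobInner a a + y * frobInner b b - (x + y) * frobInner a b := by
  unfold frobInner
  simp only [Matrix.sub_apply, Matrix.smul_apply, smul_eq_mul, Finset.mul_sum,
    ← Finset.sum_sub_distrib, ← Finset.sum_add_distrib]
  refine Finset.sum_congr rfl fun i _ => ?_
  refine Finset.sum_congr rfl fun j _ => ?_
  ring

end Aux

/-- lower coercivity bound for the F-distance in the case `δ > 0`, `p ≥ 2`:
`δ^(p-2) |A^sym - B^sym|² ≤ c |F(A) - F(B)|²`, with `c` depending only on `p`. -/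
theorem coercivity_F_distance (p : ℝ) (hp : 2 ≤ p) :
    ∃ c : ℝ, 0 < c ∧
      ∀ (δ : ℝ), 0 < δ → ∀ (d : ℕ) (A B : Matrix (Fin d) (Fin d) ℝ),
        δ ^ (p - 2) * frob (msym A - msym B) ^ 2 ≤
          c * frob (Fmap δ p A - Fmap δ p B) ^ 2 := by
  refine ⟨1, one_pos, fun δ hδ d A B => ?_⟩
  set α : ℝ := (p - 2) / 2 with hα
  have hα0 : 0 ≤ α := div_nonneg (by linarith) (by norm_num)
  set a := msym A
  set b := msym B
  set s := frob a with hs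
  set t := frob b with ht
  have hs0 : 0 ≤ s := frob_nonneg a
  have ht0 : 0 ≤ t := frob_nonneg b
  set ga : ℝ := (δ + s) ^ α with hga
  set gb : ℝ := (δ + t) ^ α with hgb
  set dl : ℝ := δ ^ α with hdl
  have hdl0 : 0 ≤ dl := Real.rpow_nonneg hδ.le α
  have hdlga : dl ≤ ga := Real.rpow_le_rpow hδ.le (by linarith) hα0
  have hdlgb : dl ≤ gb := Real.rpow_le_rpow hδ.le (by linarith) hα0
  -- monotonicity cross term
  have hmono : 0 ≤ (s - t) * (ga - gb) := by
    rcases le_total s t with h | h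
    · have hg : ga ≤ gb := Real.rpow_le_rpow (by linarith) (by linarith) hα0
      nlinarith [mul_nonneg (by linarith : (0:ℝ) ≤ t - s) (by linarith : (0:ℝ) ≤ gb - ga)]
    · have : gb ≤ ga := Real.rpow_le_rpow (by linarith) (by linarith) hα0
      exact mul_nonneg (by linarith) (by linarith)
  -- Fmap difference
  have hF : Fmap δ p A - Fmap δ p B = ga • a - gb • b := rfl
  set u := frobInner a b with hu
  have hust : u ≤ s * t := frobInner_le a b
  -- strong monotonicity
  have hmonot : dl * frob (a - b) ^ 2 ≤ frobInner (ga • a - gb • b) (a - b) := by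
    have h1 : frob (a - b) ^ 2 = s ^ 2 + t ^ 2 - 2 * u := by
      have := frobInner_expand (d := d) 1 1 a b
      simp only [one_smul, one_mul] at this
      rw [← frobInner_self, this, frobInner_self, frobInner_self, ← hs, ← ht, ← hu]
      ring
    rw [frobInner_expand, frobInner_self, frobInner_self, ← hs, ← ht, ← hu, h1]
    nlinarith [mul_nonneg (mul_nonneg hs0 ht0) hmono,
      mul_nonneg (by linarith : (0:ℝ) ≤ ga + gb - 2 * dl) (by linarith : (0:ℝ) ≤ s * t - u),
      mul_nonneg hs0 hmono, mul_nonneg (by linarith : (0:ℝ) ≤ gb - dl) (sq_nonneg (s - t))]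
  -- Cauchy–Schwarz
  have hcs : frobInner (ga • a - gb • b) (a - b) ≤ frob (ga • a - gb • b) * frob (a - b) :=
    frobInner_le _ _
  have key : dl * frob (a - b) ^ 2 ≤ frob (ga • a - gb • b) * frob (a - b) :=
    hmonot.trans hcs
  have hX : 0 ≤ frob (a - b) := frob_nonneg _
  have hY : 0 ≤ frob (ga • a - gb • b) := frob_nonneg _
  have hsq : dl ^ 2 * frob (a - b) ^ 2 ≤ frob (ga • a - gb • b) ^ 2 := by
    rcases eq_or_lt_of_le hX with h0 | h0
    · rw [← h0]; simpa using sq_nonneg (frob (ga • a - gb • b))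
    · have h2 : dl * frob (a - b) ≤ frob (ga • a - gb • b) := by
        rw [← mul_le_mul_iff_left₀ h0]
        nlinarith [key]
      nlinarith [mul_nonneg hdl0 hX]
  have hdl2 : dl ^ 2 = δ ^ (p - 2) := by
    rw [hdl, ← Real.rpow_natCast (δ ^ α) 2, ← Real.rpow_mul hδ.le]
    norm_num [hα]
  rw [hF, one_mul, ← hdl2]
  exact hsq
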